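/- Let P be a bounded poset and [x<y] ∈ Q(P). Then the principal lower set [x<y]^↓ = {[u<v] : x ≤ u, v ≤ y} is a Dacey subset of (Q(P), ⊥), assuming P (or at least the interval [x,y]) satisfies appropriate chain conditions so that bases are finite; in particular for finite P, [x<y]^↓ is Dacey. -/

import Mathlib

/-- The polar (orthocomplement) of a subset: all elements orthogonal to every element of `X`. -/
def pol {O : Type*} (r : O → O → Prop) (X : Set O) : Set O := {y | ∀ x ∈ X, r y x}

/-- A set is orthoclosed if it equals its double polar. -/
def IsOC {O : Type*} (r : O → O → Prop) (X : Set O) : Prop := pol r (pol r X) = X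

/-- A basis of `X`: a maximal pairwise orthogonal subset of `X`. -/
def IsBasis {O : Type*} (r : O → O → Prop) (X B : Set O) : Prop :=
  B ⊆ X ∧ B.Pairwise r ∧ ∀ C : Set O, B ⊆ C → C ⊆ X → C.Pairwise r → C = B

/-- A Dacey set: orthoclosed and recovered as the double polar of each of its bases. -/
def IsDacey {O : Type*} (r : O → O → Prop) (X : Set O) : Prop :=
  IsOC r X ∧ ∀ B : Set O, IsBasis r X B → pol r (pol r B) = X

/-- The proper quotients of a poset `P`: pairs `(a,b)` with `a < b`. -/
abbrev Quot1 (P : Type*) [PartialOrder P] : Type _ := {p : P × P // p.1 < p.2}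

/-- `[a<b] ⊥ [c<d]` iff `b ≤ c` or `d ≤ a`. -/
def perpQ {P : Type*} [PartialOrder P] (q₁ q₂ : Quot1 P) : Prop :=
  q₁.1.2 ≤ q₂.1.1 ∨ q₂.1.2 ≤ q₁.1.1

/-- The partial order on proper quotients: `[u<v] ≤ [a<b]` iff `a ≤ u` and `v ≤ b`. -/
def leQ {P : Type*} [PartialOrder P] (q₁ q₂ : Quot1 P) : Prop :=
  q₂.1.1 ≤ q₁.1.1 ∧ q₁.1.2 ≤ q₂.1.2

/-- `τ(U)`: quotients whose top endpoint lies in `U`. -/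
def tau {P : Type*} [PartialOrder P] (U : Set P) : Set (Quot1 P) := {q | q.1.2 ∈ U}

/-- `β(U)`: quotients whose bottom endpoint lies in `U`. -/
def beta {P : Type*} [PartialOrder P] (U : Set P) : Set (Quot1 P) := {q | q.1.1 ∈ U}

/-- Every finite nonempty set totally compared by a transitive relation has a top element. -/
lemma exists_max_finset {α : Type*} (r : α → α → Prop)
    (htrans : ∀ {a b c}, r a b → r b c → r a c) :
    ∀ s : Finset α, s.Nonempty → (∀ a ∈ s, ∀ b ∈ s, a ≠ b → r a b ∨ r b a) →
      ∃ m ∈ s, ∀ b ∈ s, b ≠ m → r b m := by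
  classical
  intro s
  induction s using Finset.induction_on with
  | empty => intro h; simp at h
  | insert a t ha ih =>
    intro _ htot
    rcases t.eq_empty_or_nonempty with rfl | htne
    · exact ⟨a, by simp, by simp⟩
    obtain ⟨m, hm, hmax⟩ := ih htne
      (fun x hx y hy hxy => htot x (by simp [hx]) y (by simp [hy]) hxy)
    have ham : a ≠ m := fun h => ha (h ▸ hm)
    rcases htot a (by simp) m (by simp [hm]) ham with h1 | h1
    · refine ⟨m, by simp [hm], ?_⟩
      intro b hb hbm
      rcases Finset.mem_insert.1 hb with rfl | hb
      · exact h1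
      · exact hmax b hb hbm
    · refine ⟨a, by simp, ?_⟩
      intro b hb hba
      rcases Finset.mem_insert.1 hb with rfl | hb
      · exact absurd rfl hba
      · by_cases hbm : b = m
        · exact hbm ▸ h1
        · exact htrans (hmax b hb hbm) h1

theorem principal_lower_is_dacey {P : Type*} [PartialOrder P] [BoundedOrder P] [Fintype P]
    (q : Quot1 P) :
    IsDacey perpQ {q' : Quot1 P | q.1.1 ≤ q'.1.1 ∧ q'.1.2 ≤ q.1.2} := by
  classical
  set x := q.1.1 with hx
  set y := q.1.2 with hy
  have hxy : x < y := q.2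
  set X : Set (Quot1 P) := {q' : Quot1 P | x ≤ q'.1.1 ∧ q'.1.2 ≤ y} with hX
  -- characterization of the polar of X
  have hqX : q ∈ X := ⟨le_refl _, le_refl _⟩
  have hpolX : ∀ t : Quot1 P, t ∈ pol perpQ X ↔ (t.1.2 ≤ x ∨ y ≤ t.1.1) := by
    intro t
    constructor
    · intro ht
      exact ht q hqX
    · rintro (h | h) s hs
      · exact Or.inl (h.trans hs.1)
      · exact Or.inr (hs.2.trans h)
  -- elements of X are orthogonal to anything below x or above y
  have hXsub : ∀ s ∈ X, ∀ t : Quot1 P, (t.1.2 ≤ x ∨ y ≤ t.1.1) → perpQ s t := by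
    rintro s hs t (h | h)
    · exact Or.inr (h.trans hs.1)
    · exact Or.inl (hs.2.trans h)
  have hOC : pol perpQ (pol perpQ X) = X := by
    apply Set.Subset.antisymm
    · intro s hs
      constructor
      · rcases (bot_le (a := x)).lt_or_eq with hbx | hbx
        · have hperp : perpQ s ⟨(⊥, x), hbx⟩ :=
            hs _ ((hpolX _).2 (Or.inl le_rfl))
          rcases hperp with h | h
          · exact absurd ((s.2.trans_le h).trans_le bot_le) (lt_irrefl _)
          · exact h
        · exact hbx.symm ▸ bot_le
      · rcases (le_top (a := y)).lt_or_eq with hyt | hyt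
        · have hperp : perpQ s ⟨(y, ⊤), hyt⟩ :=
            hs _ ((hpolX _).2 (Or.inr le_rfl))
          rcases hperp with h | h
          · exact h
          · exact absurd ((lt_of_le_of_lt h s.2).trans_le le_top) (lt_irrefl _)
        · exact hyt ▸ le_top
    · intro s hs t ht
      exact hXsub s hs t ((hpolX t).1 ht)
  refine ⟨hOC, ?_⟩
  intro B hB
  -- key claim: pol B ⊆ pol X
  have key : ∀ t : Quot1 P, t ∈ pol perpQ B → (t.1.2 ≤ x ∨ y ≤ t.1.1) := by
    intro t ht
    by_contra hcon
    push_neg at hcon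
    obtain ⟨hdx, hyc⟩ := hcon
    set c := t.1.1 with hc
    set d := t.1.2 with hd
    have hcd : c < d := t.2
    -- split B into the part below t and the part above t
    set L : Set (Quot1 P) := {b ∈ B | b.1.2 ≤ c} with hL
    set U : Set (Quot1 P) := {b ∈ B | d ≤ b.1.1} with hU
    have hLU : ∀ b ∈ B, b ∈ L ∨ b ∈ U := by
      intro b hb
      rcases ht b hb with h | h
      · exact Or.inr ⟨hb, h⟩
      · exact Or.inl ⟨hb, h⟩
    -- get the endpoint m
    obtain ⟨m, hxm, hmy, hLm, hmc⟩ :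
        ∃ m : P, x ≤ m ∧ m ≤ y ∧ (∀ b ∈ L, b.1.2 ≤ m) ∧ (m ≤ c ∨ m = x) := by
      rcases L.eq_empty_or_nonempty with hLe | hLne
      · exact ⟨x, le_rfl, hxy.le, by simp [hLe], Or.inr rfl⟩
      · have hfin : L.Finite := Set.toFinite L
        obtain ⟨b0, hb0, hmax⟩ := exists_max_finset
          (fun (a b : Quot1 P) => a.1.2 ≤ b.1.1)
          (fun {a b c} h1 h2 => h1.trans (b.2.le.trans h2))
          hfin.toFinset
          (hfin.toFinset_nonempty.mpr hLne)
          (by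
            intro a ha b hb hab
            rw [Set.Finite.mem_toFinset] at ha hb
            exact hB.2.1 ha.1 hb.1 (fun h => hab (by exact_mod_cast h)))
        rw [Set.Finite.mem_toFinset] at hb0
        have hbX : b0 ∈ X := hB.1 hb0.1
        refine ⟨b0.1.2, hbX.1.trans b0.2.le, hbX.2, ?_, Or.inl hb0.2⟩
        intro b hbL
        by_cases hbb : b = b0
        · exact hbb ▸ le_rfl
        · have := hmax b (by rwa [Set.Finite.mem_toFinset]) hbb
          exact this.trans b0.2.le
    -- get the endpoint M
    obtain ⟨M, hxM, hMy, hUM, hMd⟩ :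
        ∃ M : P, x ≤ M ∧ M ≤ y ∧ (∀ b ∈ U, M ≤ b.1.1) ∧ (d ≤ M ∨ M = y) := by
      rcases U.eq_empty_or_nonempty with hUe | hUne
      · exact ⟨y, hxy.le, le_rfl, by simp [hUe], Or.inr rfl⟩
      · have hfin : U.Finite := Set.toFinite U
        obtain ⟨u0, hu0, hmax⟩ := exists_max_finset
          (fun (a b : Quot1 P) => b.1.2 ≤ a.1.1)
          (fun {a b c} h1 h2 => h2.trans (b.2.le.trans h1))
          hfin.toFinset
          (hfin.toFinset_nonempty.mpr hUne)
          (by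
            intro a ha b hb hab
            rw [Set.Finite.mem_toFinset] at ha hb
            exact (hB.2.1 ha.1 hb.1 (fun h => hab (by exact_mod_cast h))).symm)
        rw [Set.Finite.mem_toFinset] at hu0
        have huX : u0 ∈ X := hB.1 hu0.1
        refine ⟨u0.1.1, huX.1, u0.2.le.trans huX.2, ?_, Or.inl hu0.2⟩
        intro b hbU
        by_cases hbb : b = u0
        · exact hbb ▸ le_rfl
        · have := hmax b (by rwa [Set.Finite.mem_toFinset]) hbb
          exact u0.2.le.trans this
    -- m < M
    have hmM : m < M := by
      rcases hmc with hc1 | hc1 <;> rcases hMd with hd1 | hd1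
      · exact lt_of_le_of_lt hc1 (lt_of_lt_of_le hcd hd1)
      · exact hd1 ▸ lt_of_le_of_ne hmy (fun h => hyc (h ▸ hc1))
      · exact lt_of_le_of_ne (hc1 ▸ hxM) (fun h => hdx (hd1.trans (hc1 ▸ h.symm.le)))
      · exact hc1 ▸ hd1 ▸ hxy
    set s : Quot1 P := ⟨(m, M), hmM⟩ with hs
    have hsX : s ∈ X := ⟨hxm, hMy⟩
    have hsB : ∀ b ∈ B, perpQ s b ∧ perpQ b s := by
      intro b hb
      rcases hLU b hb with hbL | hbU
      · exact ⟨Or.inr (hLm b hbL), Or.inl (hLm b hbL)⟩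
      · exact ⟨Or.inl (hUM b hbU), Or.inr (hUM b hbU)⟩
    have hsnB : s ∉ B := by
      intro hmem
      rcases ht s hmem with h | h
      · -- d ≤ s.1.1 = m
        rcases hmc with hc1 | hc1
        · exact absurd (h.trans hc1) (not_le_of_gt hcd)
        · exact hdx (hc1 ▸ h)
      · -- s.1.2 = M ≤ c
        rcases hMd with hd1 | hd1
        · exact absurd (hd1.trans h) (not_le_of_gt hcd)
        · exact hyc (hd1 ▸ h)
    have hpair : (insert s B).Pairwise perpQ := by
      rw [Set.pairwise_insert]
      exact ⟨hB.2.1, fun b hb _ => hsB b hb⟩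
    have := hB.2.2 (insert s B) (Set.subset_insert _ _)
      (by
        intro b hb
        rcases Set.mem_insert_iff.1 hb with rfl | hb
        · exact hsX
        · exact hB.1 hb)
      hpair
    exact hsnB (this ▸ Set.mem_insert s B)
  apply Set.Subset.antisymm
  · -- pol pol B ⊆ pol pol X = X
    have h1 : pol perpQ X ⊆ pol perpQ B := fun u hu b hb => hu b (hB.1 hb)
    intro s hs
    rw [← hOC]
    exact fun u hu => hs u (h1 hu)
  · intro s hs u hu
    exact hXsub s hs u (key u hu)
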